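/- Let p ≥ 1, ρ > 0, let S ∈ ℝ^{p×p} be symmetric positive semidefinite and let Θ ∈ ℝ^{p×p} be symmetric positive definite. Then log det Θ − tr(SΘ) − ρ ∑_{j,k=1}^p |Θ_{jk}| ≤ p · log λ₁(Θ) − (ρ/p) · λ₁(Θ). -/

import Mathlib

open Matrix

lemma psd_trace_nonneg {p : ℕ} {A : Matrix (Fin p) (Fin p) ℝ} (hA : A.PosSemidef) :
    0 ≤ A.trace := by
  rw [Matrix.trace]
  apply Finset.sum_nonneg
  intro i _
  have := hA.dotProduct_mulVec_nonneg (Pi.single i 1)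
  simpa [dotProduct, Matrix.mulVec, Pi.single_apply, Finset.sum_ite_eq] using this

lemma herm_trace_eq {p : ℕ} {Θ : Matrix (Fin p) (Fin p) ℝ} (hΘ : Θ.IsHermitian) :
    Θ.trace = ∑ i, hΘ.eigenvalues i := by
  simpa using hΘ.trace_eq_sum_eigenvalues

lemma eig_set_eq {p : ℕ} {Θ : Matrix (Fin p) (Fin p) ℝ} (hΘ : Θ.IsHermitian) :
    {μ : ℝ | ∃ v : Fin p → ℝ, v ≠ 0 ∧ Θ.mulVec v = μ • v} = Set.range hΘ.eigenvalues := by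
  ext μ
  constructor
  · rintro ⟨v, hv, hmv⟩
    rw [← hΘ.spectrum_real_eq_range_eigenvalues, spectrum.mem_iff]
    intro hunit
    have hdet : (algebraMap ℝ (Matrix (Fin p) (Fin p) ℝ) μ - Θ).det = 0 := by
      rw [← Matrix.exists_mulVec_eq_zero_iff]
      refine ⟨v, hv, ?_⟩
      rw [Matrix.sub_mulVec, hmv]
      ext i
      simp [Matrix.mulVec, dotProduct, Matrix.algebraMap_matrix_apply]
    exact (Matrix.isUnit_iff_isUnit_det _ |>.mp hunit).ne_zero hdet
  · rintro ⟨i, rfl⟩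
    exact ⟨_, (WithLp.ofLp_eq_zero 2).ne.2 <| hΘ.eigenvectorBasis.orthonormal.ne_zero i, hΘ.mulVec_eigenvectorBasis i⟩

/-- The largest eigenvalue of a real matrix (as the supremum of its set of eigenvalues). -/
noncomputable def maxEig {p : ℕ} (A : Matrix (Fin p) (Fin p) ℝ) : ℝ :=
  sSup {μ : ℝ | ∃ v : Fin p → ℝ, v ≠ 0 ∧ A.mulVec v = μ • v}

/-- The GLASSO objective `Q_S(Θ) = log det Θ − tr(SΘ) − ρ ∑_{j,k} |Θ_{jk}|`. -/
noncomputable def glassoObj {p : ℕ} (ρ : ℝ) (S Θ : Matrix (Fin p) (Fin p) ℝ) : ℝ :=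
  Real.log Θ.det - (S * Θ).trace - ρ * ∑ j, ∑ k, |Θ j k|

theorem glasso_objective_upper_bound
    (p : ℕ) (hp : 1 ≤ p) (ρ : ℝ) (hρ : 0 < ρ)
    (S : Matrix (Fin p) (Fin p) ℝ) (hS : S.PosSemidef)
    (Θ : Matrix (Fin p) (Fin p) ℝ) (hΘ : Θ.PosDef) :
    glassoObj ρ S Θ ≤ p * Real.log (maxEig Θ) - ρ / p * maxEig Θ := by
  have hH : Θ.IsHermitian := hΘ.1
  have hpos : ∀ i, 0 < hH.eigenvalues i := hΘ.eigenvalues_pos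
  haveI : Nonempty (Fin p) := ⟨⟨0, hp⟩⟩
  -- max eigenvalue
  obtain ⟨i0, hi0⟩ := Finite.exists_max hH.eigenvalues
  set M := hH.eigenvalues i0 with hM
  have hmaxEig : maxEig Θ = M := by
    rw [maxEig, eig_set_eq hH]
    apply le_antisymm
    · apply csSup_le (Set.range_nonempty _)
      rintro x ⟨i, rfl⟩; exact hi0 i
    · exact le_csSup (Set.Finite.bddAbove (Set.finite_range _)) ⟨i0, rfl⟩
  have hMpos : 0 < M := hpos i0
  rw [hmaxEig, glassoObj]
  -- log det ≤ p * log M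
  have h1 : Real.log Θ.det ≤ p * Real.log M := by
    have hdet : Θ.det = ∏ i, hH.eigenvalues i := by
      simpa using hH.det_eq_prod_eigenvalues
    rw [hdet, Real.log_prod (fun i _ => (hpos i).ne')]
    calc ∑ i, Real.log (hH.eigenvalues i) ≤ ∑ _i : Fin p, Real.log M :=
          Finset.sum_le_sum fun i _ => Real.log_le_log (hpos i) (hi0 i)
      _ = p * Real.log M := by simp [Finset.card_univ]
  -- trace term nonneg
  have h2 : 0 ≤ (S * Θ).trace := by
    open scoped MatrixOrder in
    set B := CFC.sqrt Θ with hB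
    open scoped MatrixOrder in
    have hBB : B * B = Θ := CFC.sqrt_mul_sqrt_self Θ hΘ.posSemidef.nonneg
    open scoped MatrixOrder in
    have hBH : B.IsHermitian := (Matrix.nonneg_iff_posSemidef.mp (CFC.sqrt_nonneg Θ)).1
    have : (S * Θ).trace = (Bᴴ * S * B).trace := by
      rw [← hBB, ← mul_assoc, Matrix.trace_mul_comm, hBH.eq, ← mul_assoc]
    rw [this]
    exact psd_trace_nonneg (hS.conjTranspose_mul_mul_same B)
  -- abs sum ≥ (1/p) M
  have h3 : ρ / p * M ≤ ρ * ∑ j, ∑ k, |Θ j k| := by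
    have htr : M ≤ Θ.trace := by
      rw [herm_trace_eq hH]
      exact Finset.single_le_sum (fun i _ => (hpos i).le) (Finset.mem_univ i0)
    have habs : Θ.trace ≤ ∑ j, ∑ k, |Θ j k| := by
      rw [Matrix.trace]
      apply Finset.sum_le_sum
      intro j _
      calc Matrix.diag Θ j ≤ |Θ j j| := le_abs_self _
        _ ≤ ∑ k, |Θ j k| := Finset.single_le_sum (f := fun k => |Θ j k|) (fun k _ => abs_nonneg _) (Finset.mem_univ j)
    have hρp : ρ / p ≤ ρ := by
      have hp1 : (1:ℝ) ≤ p := by exact_mod_cast hp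
      rw [div_le_iff₀ (by positivity)]
      nlinarith
    calc ρ / p * M ≤ ρ * M := by
          apply mul_le_mul_of_nonneg_right hρp hMpos.le
      _ ≤ ρ * ∑ j, ∑ k, |Θ j k| := by
          apply mul_le_mul_of_nonneg_left (htr.trans habs) hρ.le
  linarith
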